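/- Let T' be a tree, let v be a vertex of T' with γ(T'; v) = γ(T'), and let T be the tree obtained from T' by adding a new path on two vertices u, w (with edge uw) together with the edge vu. Then γ(T) = γ(T') + 1 and γ_t2(T) ≤ γ_t2(T') + 1; in particular, if γ(T') = γ_t2(T'), then γ(T) = γ_t2(T). -/

import Mathlib

open SimpleGraph

/-- A dominating set: every vertex outside `S` has a neighbor in `S`. -/
def IsDominatingSet {V : Type} (G : SimpleGraph V) (S : Set V) : Prop :=
  ∀ v ∉ S, ∃ u ∈ S, G.Adj u v

/-- A total dominating set: every vertex has a neighbor in `S`. -/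
def IsTotalDominatingSet {V : Type} (G : SimpleGraph V) (S : Set V) : Prop :=
  ∀ v : V, ∃ u ∈ S, G.Adj u v

/-- `u` is within distance two of `v`. -/
def WithinTwo {V : Type} (G : SimpleGraph V) (u v : V) : Prop :=
  G.Adj u v ∨ ∃ w, G.Adj u w ∧ G.Adj w v

/-- A semitotal dominating set: a dominating set in which every vertex is within
distance two of another vertex of the set. -/
def IsSemitotalDominatingSet {V : Type} (G : SimpleGraph V) (S : Set V) : Prop :=
  IsDominatingSet G S ∧ ∀ v ∈ S, ∃ u ∈ S, u ≠ v ∧ WithinTwo G u v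

/-- The domination number `γ(G)`. -/
noncomputable def dominationNumber {V : Type} (G : SimpleGraph V) : ℕ :=
  sInf {n | ∃ S : Set V, IsDominatingSet G S ∧ S.ncard = n}

/-- The total domination number `γ_t(G)`. -/
noncomputable def totalDominationNumber {V : Type} (G : SimpleGraph V) : ℕ :=
  sInf {n | ∃ S : Set V, IsTotalDominatingSet G S ∧ S.ncard = n}

/-- The semitotal domination number `γ_t2(G)`. -/
noncomputable def semitotalDominationNumber {V : Type} (G : SimpleGraph V) : ℕ :=
  sInf {n | ∃ S : Set V, IsSemitotalDominatingSet G S ∧ S.ncard = n}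

/-- A leaf: a vertex of degree one. -/
def IsLeaf {V : Type} (G : SimpleGraph V) (v : V) : Prop :=
  (G.neighborSet v).ncard = 1

/-- A support vertex: a vertex adjacent to a leaf. -/
def IsSupport {V : Type} (G : SimpleGraph V) (v : V) : Prop :=
  ∃ u, G.Adj v u ∧ IsLeaf G u

/-- A star: a graph isomorphic to `K_{1,m}` for some `m ≥ 1`. -/
def IsStar {V : Type} (G : SimpleGraph V) : Prop :=
  ∃ m : ℕ, 1 ≤ m ∧ Nonempty (G ≃g completeBipartiteGraph Unit (Fin m))

/-- The graph obtained from the disjoint union of `G` and `H` by adding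
the single edge joining `v : V` to `w : W`. -/
def attach {V W : Type} (G : SimpleGraph V) (H : SimpleGraph W) (v : V) (w : W) :
    SimpleGraph (V ⊕ W) where
  Adj x y :=
    match x, y with
    | Sum.inl a, Sum.inl b => G.Adj a b
    | Sum.inr a, Sum.inr b => H.Adj a b
    | Sum.inl a, Sum.inr b => a = v ∧ b = w
    | Sum.inr a, Sum.inl b => b = v ∧ a = w
  symm := by
    constructor
    rintro (a | a) (b | b) h
    · exact G.adj_symm h
    · exact ⟨h.1, h.2⟩
    · exact ⟨h.1, h.2⟩
    · exact H.adj_symm h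
  loopless := by
    constructor
    rintro (a | a) h
    · exact G.irrefl h
    · exact H.irrefl h

/-- The statuses used to label the vertices of trees in the family `𝒯`. -/
inductive Label : Type
  | A | B | C
deriving DecidableEq

/-- The labeling of the path `P₅` assigning `A` to the two support vertices,
`C` to the two leaves and `B` to the center. -/
def pathLabel : Fin 5 → Label
  | 0 => Label.C
  | 1 => Label.A
  | 2 => Label.B
  | 3 => Label.A
  | 4 => Label.C

/-- The family `𝒯` of labeled trees: it contains the labeled path `P₅`, and is closed
under operation `𝒪₁` (attach a new leaf labeled `C` to a vertex labeled `A`), operation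
`𝒪₂` (attach a labeled path `P₅` to a degree-one vertex labeled `C`), and under
isomorphism of labeled graphs. -/
inductive TFamily : ∀ {V : Type}, SimpleGraph V → (V → Label) → Prop
  | base : TFamily (SimpleGraph.pathGraph 5) pathLabel
  | op1 {V : Type} {G : SimpleGraph V} {f : V → Label} (v : V)
      (hv : f v = Label.A) (h : TFamily G f) :
      TFamily (attach G (⊥ : SimpleGraph (Fin 1)) v 0)
        (Sum.elim f (fun _ => Label.C))
  | op2 {V : Type} {G : SimpleGraph V} {f : V → Label} (v : V)
      (hv : f v = Label.C) (hdeg : (G.neighborSet v).ncard = 1) (h : TFamily G f) :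
      TFamily (attach G (SimpleGraph.pathGraph 5) v 0) (Sum.elim f pathLabel)
  | iso {V W : Type} {G : SimpleGraph V} {H : SimpleGraph W} {f : V → Label}
      (e : G ≃g H) (h : TFamily G f) : TFamily H (fun w => f (e.symm w))

/-- The subdivided star with `t` leaves: center `none`, and for each `i : Fin t`
a path `none — some (i,0) — some (i,1)`. -/
def subdividedStar (t : ℕ) : SimpleGraph (Option (Fin t × Fin 2)) :=
  SimpleGraph.fromRel (fun x y =>
    match x, y with
    | none, some p => p.2 = 0
    | some p, some q => p.1 = q.1 ∧ p.2 = 0 ∧ q.2 = 1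
    | _, _ => False)

/-- The tree `Y` with three leaves, obtained from the star `K_{1,3}` with center `0`
by subdividing exactly one edge: edges `0-1`, `0-2`, `0-3`, `3-4`.  Its leaves are
`1`, `2`, `4`; the leaf-neighbors of the center are `1` and `2`. -/
def Ytree : SimpleGraph (Fin 5) :=
  SimpleGraph.fromRel (fun x y =>
    (x = 0 ∧ y = 1) ∨ (x = 0 ∧ y = 2) ∨ (x = 0 ∧ y = 3) ∨ (x = 3 ∧ y = 4))

/-- An almost dominating set of `G` relative to `v`: dominates every vertex except
possibly `v`. -/
def IsAlmostDominatingSet {V : Type} (G : SimpleGraph V) (v : V) (S : Set V) : Prop :=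
  ∀ w, w ≠ v → w ∉ S → ∃ u ∈ S, G.Adj u w

/-- The almost domination number `γ(G; v)`. -/
noncomputable def almostDominationNumber {V : Type} (G : SimpleGraph V) (v : V) : ℕ :=
  sInf {n | ∃ S : Set V, IsAlmostDominatingSet G v S ∧ S.ncard = n}

/-- The family `𝒪` of trees: all trees obtainable from the path `P₄` by a finite
sequence of the operations `𝒪₁`–`𝒪₄` (and taking isomorphic copies). -/
inductive OFamily : ∀ {V : Type}, SimpleGraph V → Prop
  | base : OFamily (SimpleGraph.pathGraph 4)
  | op1 {V : Type} {G : SimpleGraph V} (v : V)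
      (hv : ∃ S : Set V, IsSemitotalDominatingSet G S ∧
        S.ncard = semitotalDominationNumber G ∧ v ∈ S)
      (h : OFamily G) :
      OFamily (attach G (⊥ : SimpleGraph (Fin 1)) v 0)
  | op2short {V : Type} {G : SimpleGraph V} (v : V)
      (hv : almostDominationNumber G v = dominationNumber G) (h : OFamily G) :
      OFamily (attach G (SimpleGraph.pathGraph 2) v 0)
  | op2long {V : Type} {G : SimpleGraph V} (v : V)
      (hv : almostDominationNumber G v = dominationNumber G) (h : OFamily G) :
      OFamily (attach G (SimpleGraph.pathGraph 5) v 0)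
  | op3 {V : Type} {G : SimpleGraph V} (v : V) (t : ℕ) (ht : 2 ≤ t) (h : OFamily G) :
      OFamily (attach G (subdividedStar t) v none)
  | op4 {V : Type} {G : SimpleGraph V} (v : V) (h : OFamily G) :
      OFamily (attach G Ytree v 1)
  | iso {V W : Type} {G : SimpleGraph V} {H : SimpleGraph W}
      (e : G ≃g H) (h : OFamily G) : OFamily H

-- auxiliary lemmas

lemma attach_adj_inl_inl {V W : Type} {G : SimpleGraph V} {H : SimpleGraph W} {v : V} {w : W}
    {a b : V} : (attach G H v w).Adj (Sum.inl a) (Sum.inl b) ↔ G.Adj a b := Iff.rfl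

lemma attach_adj_inr_inr {V W : Type} {G : SimpleGraph V} {H : SimpleGraph W} {v : V} {w : W}
    {a b : W} : (attach G H v w).Adj (Sum.inr a) (Sum.inr b) ↔ H.Adj a b := Iff.rfl

lemma attach_adj_inl_inr {V W : Type} {G : SimpleGraph V} {H : SimpleGraph W} {v : V} {w : W}
    {a : V} {b : W} : (attach G H v w).Adj (Sum.inl a) (Sum.inr b) ↔ a = v ∧ b = w := Iff.rfl

lemma attach_adj_inr_inl {V W : Type} {G : SimpleGraph V} {H : SimpleGraph W} {v : V} {w : W}
    {a : W} {b : V} : (attach G H v w).Adj (Sum.inr a) (Sum.inl b) ↔ b = v ∧ a = w := Iff.rfl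

lemma univ_isDominating {V : Type} (G : SimpleGraph V) : IsDominatingSet G Set.univ :=
  fun x hx => absurd (Set.mem_univ x) hx

lemma domSet_nonempty {V : Type} (G : SimpleGraph V) :
    {n | ∃ S : Set V, IsDominatingSet G S ∧ S.ncard = n}.Nonempty :=
  ⟨_, Set.univ, univ_isDominating G, rfl⟩

lemma exists_min_dom {V : Type} (G : SimpleGraph V) :
    ∃ S : Set V, IsDominatingSet G S ∧ S.ncard = dominationNumber G := by
  have := Nat.sInf_mem (domSet_nonempty G)
  obtain ⟨S, hS, hc⟩ := this
  exact ⟨S, hS, hc⟩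

lemma dominationNumber_le {V : Type} {G : SimpleGraph V} {S : Set V}
    (h : IsDominatingSet G S) : dominationNumber G ≤ S.ncard :=
  Nat.sInf_le ⟨S, h, rfl⟩

lemma almostDominationNumber_le {V : Type} {G : SimpleGraph V} {v : V} {S : Set V}
    (h : IsAlmostDominatingSet G v S) : almostDominationNumber G v ≤ S.ncard :=
  Nat.sInf_le ⟨S, h, rfl⟩

lemma semitotalDominationNumber_le {V : Type} {G : SimpleGraph V} {S : Set V}
    (h : IsSemitotalDominatingSet G S) : semitotalDominationNumber G ≤ S.ncard :=
  Nat.sInf_le ⟨S, h, rfl⟩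

lemma exists_adj_of_connected {V : Type} {G : SimpleGraph V} (hc : G.Connected)
    {x y : V} (hxy : x ≠ y) : ∃ z, G.Adj x z := by
  obtain ⟨p⟩ := hc x y
  exact ⟨p.getVert 1, p.adj_snd (SimpleGraph.Walk.not_nil_of_ne hxy)⟩

lemma dominationNumber_pos {V : Type} [Fintype V] [Nonempty V] (G : SimpleGraph V) :
    1 ≤ dominationNumber G := by
  by_contra h
  push_neg at h
  interval_cases h' : dominationNumber G
  obtain ⟨S, hS, hc⟩ := exists_min_dom G
  rw [h'] at hc
  rw [Set.ncard_eq_zero (Set.toFinite S)] at hc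
  subst hc
  obtain ⟨x⟩ := ‹Nonempty V›
  obtain ⟨u, hu, -⟩ := hS x (Set.notMem_empty x)
  exact hu


/-- Attaching a path on two new vertices to a vertex `v` of a tree `T'`
with `γ(T'; v) = γ(T')` gives a tree `T` with `γ(T) = γ(T') + 1` and
`γ_t2(T) ≤ γ_t2(T') + 1`; in particular `γ(T') = γ_t2(T')` implies `γ(T) = γ_t2(T)`. -/
theorem attach_path2_domination {V : Type} [Fintype V] (T' : SimpleGraph V)
    (hT' : T'.IsTree) (v : V)
    (hv : almostDominationNumber T' v = dominationNumber T') :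
    dominationNumber (attach T' (SimpleGraph.pathGraph 2) v 0) = dominationNumber T' + 1 ∧
      semitotalDominationNumber (attach T' (SimpleGraph.pathGraph 2) v 0) ≤
        semitotalDominationNumber T' + 1 ∧
      (dominationNumber T' = semitotalDominationNumber T' →
        dominationNumber (attach T' (SimpleGraph.pathGraph 2) v 0) =
          semitotalDominationNumber (attach T' (SimpleGraph.pathGraph 2) v 0)) := by
  have hconn : T'.Connected := hT'.isConnected
  have : Nonempty V := hconn.nonempty
  set T : SimpleGraph (V ⊕ Fin 2) := attach T' (SimpleGraph.pathGraph 2) v 0 with hTdef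
  have hadj01 : (SimpleGraph.pathGraph 2).Adj 0 1 := by
    rw [SimpleGraph.pathGraph_adj]; left; rfl
  -- there is a vertex distinct from v
  have hne2 : ∃ x : V, x ≠ v := by
    by_contra h
    push_neg at h
    have h0 : almostDominationNumber T' v = 0 := by
      have : almostDominationNumber T' v ≤ (∅ : Set V).ncard :=
        almostDominationNumber_le (fun w hw _ => absurd (h w) hw)
      simpa using this
    have h1 := dominationNumber_pos T'
    omega
  have hnbr : ∀ x : V, ∃ z, T'.Adj x z := by
    intro x
    obtain ⟨y, hy⟩ := hne2
    by_cases hx : x = v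
    · exact exists_adj_of_connected hconn (by rw [hx]; exact (Ne.symm hy))
    · exact exists_adj_of_connected hconn hx
  -- generic: lift a dominating set of T' (plus inr 0) to a dominating set of T
  have hliftdom : ∀ S : Set V, IsDominatingSet T' S →
      IsDominatingSet T (Sum.inl '' S ∪ {Sum.inr 0}) := by
    intro S hS z hz
    match z with
    | Sum.inl x =>
      have hx : x ∉ S := fun hx => hz (Or.inl ⟨x, hx, rfl⟩)
      obtain ⟨u, hu, hadj⟩ := hS x hx
      exact ⟨Sum.inl u, Or.inl ⟨u, hu, rfl⟩, hadj⟩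
    | Sum.inr b =>
      have hb : b ≠ 0 := fun hb => hz (Or.inr (by simp [hb]))
      have hb1 : b = 1 := by omega
      exact ⟨Sum.inr 0, Or.inr rfl, by rw [hb1]; exact hadj01⟩
  have hcardlift : ∀ S : Set V, (Sum.inl '' S ∪ {Sum.inr (0 : Fin 2)} : Set (V ⊕ Fin 2)).ncard
      = S.ncard + 1 := by
    intro S
    rw [Set.ncard_union_eq (by simp) (Set.toFinite _) (Set.toFinite _),
      Set.ncard_image_of_injective _ Sum.inl_injective, Set.ncard_singleton]
  -- γ(T) ≤ γ(T') + 1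
  have hub : dominationNumber T ≤ dominationNumber T' + 1 := by
    obtain ⟨S, hS, hc⟩ := exists_min_dom T'
    have := dominationNumber_le (hliftdom S hS)
    rw [hcardlift S, hc] at this
    exact this
  -- γ(T') + 1 ≤ γ(T)
  have hlb : dominationNumber T' + 1 ≤ dominationNumber T := by
    obtain ⟨D, hD, hc⟩ := exists_min_dom T
    have hr : Sum.inr (0 : Fin 2) ∈ D ∨ Sum.inr (1 : Fin 2) ∈ D := by
      by_contra h
      push_neg at h
      obtain ⟨u, hu, hadj⟩ := hD (Sum.inr 1) h.2
      match u with
      | Sum.inl a =>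
        have := attach_adj_inl_inr.mp hadj
        exact absurd this.2 (by decide)
      | Sum.inr b =>
        have hb : (SimpleGraph.pathGraph 2).Adj b 1 := attach_adj_inr_inr.mp hadj
        rw [SimpleGraph.pathGraph_adj] at hb
        have : b = 0 := by omega
        rw [this] at hu
        exact h.1 hu
    set D' : Set V := Sum.inl ⁻¹' D with hD'def
    have halmost : IsAlmostDominatingSet T' v D' := by
      intro w hw hwD
      obtain ⟨u, hu, hadj⟩ := hD (Sum.inl w) hwD
      match u with
      | Sum.inl a => exact ⟨a, hu, attach_adj_inl_inl.mp hadj⟩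
      | Sum.inr b =>
        have := attach_adj_inr_inl.mp hadj
        exact absurd this.1 hw
    obtain ⟨z, hz, hzr⟩ : ∃ z, z ∈ D ∧ ∃ b : Fin 2, z = Sum.inr b := by
      rcases hr with h | h
      · exact ⟨_, h, 0, rfl⟩
      · exact ⟨_, h, 1, rfl⟩
    have hsub : insert z (Sum.inl '' D') ⊆ D := by
      intro x hx
      rcases hx with rfl | ⟨a, ha, rfl⟩
      · exact hz
      · exact ha
    have hnotmem : z ∉ Sum.inl '' D' := by
      obtain ⟨b, rfl⟩ := hzr
      rintro ⟨a, -, h⟩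
      exact Sum.inl_ne_inr h
    have hcard : D'.ncard + 1 ≤ D.ncard := by
      have h1 : (insert z (Sum.inl '' D')).ncard ≤ D.ncard :=
        Set.ncard_le_ncard hsub (Set.toFinite D)
      rw [Set.ncard_insert_of_notMem hnotmem (Set.toFinite _),
        Set.ncard_image_of_injective _ Sum.inl_injective] at h1
      omega
    have h2 : almostDominationNumber T' v ≤ D'.ncard := almostDominationNumber_le halmost
    omega
  have hdom : dominationNumber T = dominationNumber T' + 1 := le_antisymm hub hlb
  -- semitotal: T' has a semitotal dominating set (univ)
  have hunivst : IsSemitotalDominatingSet T' Set.univ := by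
    refine ⟨univ_isDominating T', fun x _ => ?_⟩
    obtain ⟨z, hz⟩ := hnbr x
    exact ⟨z, Set.mem_univ z, hz.ne', Or.inl hz.symm⟩
  have hstne : {n | ∃ S : Set V, IsSemitotalDominatingSet T' S ∧ S.ncard = n}.Nonempty :=
    ⟨_, Set.univ, hunivst, rfl⟩
  obtain ⟨S, hS, hScard⟩ : ∃ S : Set V, IsSemitotalDominatingSet T' S ∧
      S.ncard = semitotalDominationNumber T' := by
    obtain ⟨S, hS, hc⟩ := Nat.sInf_mem hstne
    exact ⟨S, hS, hc⟩
  -- lift S to a semitotal dominating set of T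
  have hliftst : IsSemitotalDominatingSet T (Sum.inl '' S ∪ {Sum.inr 0}) := by
    refine ⟨hliftdom S hS.1, fun z hz => ?_⟩
    rcases hz with ⟨s, hs, rfl⟩ | hz
    · obtain ⟨u, hu, hne, hw2⟩ := hS.2 s hs
      refine ⟨Sum.inl u, Or.inl ⟨u, hu, rfl⟩, by simpa using hne, ?_⟩
      rcases hw2 with h | ⟨w, h1, h2⟩
      · exact Or.inl h
      · exact Or.inr ⟨Sum.inl w, h1, h2⟩
    · have hz0 : z = Sum.inr 0 := hz
      subst hz0
      by_cases hvS : v ∈ S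
      · exact ⟨Sum.inl v, Or.inl ⟨v, hvS, rfl⟩, Sum.inl_ne_inr,
          Or.inl (attach_adj_inl_inr.mpr ⟨rfl, rfl⟩)⟩
      · obtain ⟨u, hu, hadj⟩ := hS.1 v hvS
        exact ⟨Sum.inl u, Or.inl ⟨u, hu, rfl⟩, Sum.inl_ne_inr,
          Or.inr ⟨Sum.inl v, hadj, attach_adj_inl_inr.mpr ⟨rfl, rfl⟩⟩⟩
  have hst : semitotalDominationNumber T ≤ semitotalDominationNumber T' + 1 := by
    have := semitotalDominationNumber_le hliftst
    rw [hcardlift S, hScard] at this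
    exact this
  refine ⟨hdom, hst, fun heq => ?_⟩
  -- γ(T) ≤ γ_t2(T)
  have hTstne : {n | ∃ S : Set (V ⊕ Fin 2), IsSemitotalDominatingSet T S ∧ S.ncard = n}.Nonempty :=
    ⟨_, _, hliftst, rfl⟩
  have hle : dominationNumber T ≤ semitotalDominationNumber T := by
    obtain ⟨S2, hS2, hc2⟩ := Nat.sInf_mem hTstne
    have := dominationNumber_le hS2.1
    rw [hc2] at this
    exact this
  omega
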